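/- Fix 0 < H < 1/2 and 0 ≤ θ ≤ H. For t > 0, h ∈ ℝ and x, y ∈ ℝ define d²(x,y;t,h) = ∫_0^∞ (1 - e^{-2tξ²})(1 - cos(|x-y|ξ))(1 - cos(hξ)) ξ^{-1-2H} dξ. Then there is a constant C depending only on H and θ such that d²(x,y;t,h) ≤ C |h|^{2θ} min( t^{H-θ}, |x-y|^{2H-2θ} ). -/

import Mathlib

open MeasureTheory Real Set
open scoped ENNReal


lemma aux_cos_nonneg (z : ℝ) : 0 ≤ 1 - Real.cos z := by
  have := Real.cos_le_one z; linarith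

lemma aux_cos_le_two (z : ℝ) : 1 - Real.cos z ≤ 2 := by
  have := Real.neg_one_le_cos z; linarith

lemma aux_cos_sq (z : ℝ) : 1 - Real.cos z ≤ z ^ 2 / 2 := by
  have h1 : Real.cos (z / 2) ^ 2 = 1 / 2 + Real.cos z / 2 := by
    have := Real.cos_sq (z / 2)
    rwa [mul_div_cancel₀ z (two_ne_zero)] at this
  have h2 : Real.sin (z / 2) ^ 2 ≤ (z / 2) ^ 2 := Real.sin_sq_le_sq
  have h3 := Real.sin_sq_add_cos_sq (z / 2)
  nlinarith

lemma aux_cos_min (z : ℝ) : 1 - Real.cos z ≤ min 2 (z ^ 2 / 2) := by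
  refine le_min ?_ (aux_cos_sq z)
  have := Real.neg_one_le_cos z; linarith

lemma aux_cos_rpow {θ : ℝ} (h0 : 0 ≤ θ) (h1 : θ ≤ 1) (z : ℝ) :
    1 - Real.cos z ≤ 2 * |z| ^ (2 * θ) := by
  rcases le_or_gt 1 (|z|) with hz | hz
  · have h2 : (1:ℝ) ≤ |z| ^ (2 * θ) := Real.one_le_rpow hz (by positivity)
    have := Real.neg_one_le_cos z; nlinarith
  · rcases eq_or_lt_of_le (abs_nonneg z) with hz0 | hz0
    · have : z = 0 := by rwa [eq_comm, abs_eq_zero] at hz0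
      subst this
      simp [Real.cos_zero]
      positivity
    have h2 : |z| ^ (2 : ℝ) ≤ |z| ^ (2 * θ) := by
      apply Real.rpow_le_rpow_of_exponent_ge hz0 hz.le
      nlinarith
    have h3 : |z| ^ (2 : ℝ) = z ^ 2 := by
      rw [show (2:ℝ) = ((2:ℕ):ℝ) by norm_num, Real.rpow_natCast, sq_abs]
    have h5 := aux_cos_sq z
    have h4 : (0:ℝ) ≤ |z| ^ (2 * θ) := Real.rpow_nonneg hz0.le _
    calc 1 - Real.cos z ≤ z ^ 2 / 2 := h5
      _ = |z| ^ (2:ℝ) / 2 := by rw [h3]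
      _ ≤ |z| ^ (2 * θ) / 2 := by linarith
      _ ≤ 2 * |z| ^ (2 * θ) := by linarith

lemma aux_exp_min {w : ℝ} (hw : 0 ≤ w) : 1 - Real.exp (-w) ≤ min 1 w := by
  refine le_min ?_ ?_
  · have := Real.exp_nonneg (-w); linarith
  · have := Real.add_one_le_exp (-w); linarith


lemma lint_Ioc {r c : ℝ} (hr : -1 < r) (hc : 0 < c) :
    ∫⁻ ξ in Set.Ioc (0:ℝ) c, ENNReal.ofReal (ξ ^ r) = ENNReal.ofReal (c ^ (r+1) / (r+1)) := by
  have hint : IntegrableOn (fun ξ : ℝ => ξ ^ r) (Set.Ioc 0 c) :=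
    (intervalIntegrable_iff_integrableOn_Ioc_of_le hc.le).mp (intervalIntegral.intervalIntegrable_rpow' hr)
  have hnn : 0 ≤ᵐ[volume.restrict (Set.Ioc (0:ℝ) c)] fun ξ : ℝ => ξ ^ r := by
    filter_upwards [ae_restrict_mem measurableSet_Ioc] with ξ hξ
    exact Real.rpow_nonneg hξ.1.le r
  rw [← ofReal_integral_eq_lintegral_ofReal hint hnn]
  congr 1
  rw [← intervalIntegral.integral_of_le hc.le, integral_rpow (Or.inl hr),
    Real.zero_rpow (by linarith : r + 1 ≠ 0)]
  ring

lemma lint_Ioi {r c : ℝ} (hr : r < -1) (hc : 0 < c) :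
    ∫⁻ ξ in Set.Ioi c, ENNReal.ofReal (ξ ^ r) = ENNReal.ofReal (-c ^ (r+1) / (r+1)) := by
  have hint : IntegrableOn (fun ξ : ℝ => ξ ^ r) (Set.Ioi c) :=
    integrableOn_Ioi_rpow_of_lt hr hc
  have hnn : 0 ≤ᵐ[volume.restrict (Set.Ioi c)] fun ξ : ℝ => ξ ^ r := by
    filter_upwards [ae_restrict_mem measurableSet_Ioi] with ξ hξ
    exact Real.rpow_nonneg (hc.trans hξ).le r
  rw [← ofReal_integral_eq_lintegral_ofReal hint hnn]
  congr 1
  rw [integral_Ioi_rpow_of_lt hr hc]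

lemma keyK (s : ℝ) (hs : 0 < s) (hs1 : s < 1) {b : ℝ} (hb : 0 ≤ b) :
    ∫⁻ ξ in Set.Ioi (0:ℝ), ENNReal.ofReal (min 2 (b * ξ ^ 2 / 2) * ξ ^ (-1 - 2 * s))
      ≤ ENNReal.ofReal ((2 / (2 - 2 * s) + 1 / s) * b ^ s) := by
  rcases eq_or_lt_of_le hb with hb0 | hb0
  · have : ∀ ξ ∈ Set.Ioi (0:ℝ),
        ENNReal.ofReal (min 2 (b * ξ ^ 2 / 2) * ξ ^ (-1 - 2 * s)) ≤ 0 := by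
      intro ξ hξ
      rw [← hb0]
      simp
    calc ∫⁻ ξ in Set.Ioi (0:ℝ), ENNReal.ofReal (min 2 (b * ξ ^ 2 / 2) * ξ ^ (-1 - 2 * s))
        ≤ ∫⁻ ξ in Set.Ioi (0:ℝ), (0:ℝ≥0∞) := setLIntegral_mono' measurableSet_Ioi this
      _ = 0 := lintegral_zero
      _ ≤ _ := zero_le
  · set c : ℝ := 2 / Real.sqrt b with hc
    have hsb : 0 < Real.sqrt b := Real.sqrt_pos.mpr hb0
    have hc0 : 0 < c := by positivity
    -- split the integral
    have hsplit : Set.Ioc (0:ℝ) c ∪ Set.Ioi c = Set.Ioi 0 := Set.Ioc_union_Ioi_eq_Ioi hc0.le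
    have hdisj : Disjoint (Set.Ioc (0:ℝ) c) (Set.Ioi c) := by
      simp [Set.disjoint_left]
    have hbody : ∀ ξ : ℝ, True := fun _ => trivial
    -- head piece
    have head : ∫⁻ ξ in Set.Ioc (0:ℝ) c, ENNReal.ofReal (min 2 (b * ξ ^ 2 / 2) * ξ ^ (-1 - 2 * s))
        ≤ ENNReal.ofReal (b / 2) * ENNReal.ofReal (c ^ (1 - 2 * s + 1) / (1 - 2 * s + 1)) := by
      have hmono : ∀ ξ ∈ Set.Ioc (0:ℝ) c,
          ENNReal.ofReal (min 2 (b * ξ ^ 2 / 2) * ξ ^ (-1 - 2 * s))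
            ≤ ENNReal.ofReal (b / 2 * ξ ^ (1 - 2 * s)) := by
        intro ξ hξ
        apply ENNReal.ofReal_le_ofReal
        have hξ0 : (0:ℝ) < ξ := hξ.1
        have hmul : ξ ^ ((2:ℕ):ℝ) * ξ ^ (-1 - 2 * s) = ξ ^ (1 - 2 * s) := by
          rw [← Real.rpow_add hξ0]; push_cast; ring_nf
        calc min 2 (b * ξ ^ 2 / 2) * ξ ^ (-1 - 2 * s)
            ≤ (b * ξ ^ 2 / 2) * ξ ^ (-1 - 2 * s) := by
              exact mul_le_mul_of_nonneg_right (min_le_right _ _) (Real.rpow_nonneg hξ0.le _)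
          _ = b / 2 * (ξ ^ ((2:ℕ):ℝ) * ξ ^ (-1 - 2 * s)) := by
              rw [Real.rpow_natCast]; push_cast; ring
          _ = b / 2 * ξ ^ (1 - 2 * s) := by rw [hmul]
      calc ∫⁻ ξ in Set.Ioc (0:ℝ) c, ENNReal.ofReal (min 2 (b * ξ ^ 2 / 2) * ξ ^ (-1 - 2 * s))
          ≤ ∫⁻ ξ in Set.Ioc (0:ℝ) c, ENNReal.ofReal (b / 2 * ξ ^ (1 - 2 * s)) :=
            setLIntegral_mono' measurableSet_Ioc hmono
        _ = ∫⁻ ξ in Set.Ioc (0:ℝ) c, ENNReal.ofReal (b / 2) * ENNReal.ofReal (ξ ^ (1 - 2 * s)) := by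
            simp_rw [ENNReal.ofReal_mul (by positivity : (0:ℝ) ≤ b / 2)]
        _ = ENNReal.ofReal (b / 2) * ∫⁻ ξ in Set.Ioc (0:ℝ) c, ENNReal.ofReal (ξ ^ (1 - 2 * s)) :=
            lintegral_const_mul' _ _ ENNReal.ofReal_ne_top
        _ = ENNReal.ofReal (b / 2) * ENNReal.ofReal (c ^ (1 - 2 * s + 1) / (1 - 2 * s + 1)) := by
            rw [lint_Ioc (by linarith) hc0]
    -- tail piece
    have tail : ∫⁻ ξ in Set.Ioi c, ENNReal.ofReal (min 2 (b * ξ ^ 2 / 2) * ξ ^ (-1 - 2 * s))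
        ≤ ENNReal.ofReal (2:ℝ) * ENNReal.ofReal (-c ^ (-1 - 2 * s + 1) / (-1 - 2 * s + 1)) := by
      have hmono : ∀ ξ ∈ Set.Ioi c,
          ENNReal.ofReal (min 2 (b * ξ ^ 2 / 2) * ξ ^ (-1 - 2 * s))
            ≤ ENNReal.ofReal ((2:ℝ) * ξ ^ (-1 - 2 * s)) := by
        intro ξ hξ
        apply ENNReal.ofReal_le_ofReal
        have hξ0 : (0:ℝ) < ξ := hc0.trans hξ
        exact mul_le_mul_of_nonneg_right (min_le_left _ _) (Real.rpow_nonneg hξ0.le _)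
      calc ∫⁻ ξ in Set.Ioi c, ENNReal.ofReal (min 2 (b * ξ ^ 2 / 2) * ξ ^ (-1 - 2 * s))
          ≤ ∫⁻ ξ in Set.Ioi c, ENNReal.ofReal ((2:ℝ) * ξ ^ (-1 - 2 * s)) :=
            setLIntegral_mono' measurableSet_Ioi hmono
        _ = ∫⁻ ξ in Set.Ioi c, ENNReal.ofReal (2:ℝ) * ENNReal.ofReal (ξ ^ (-1 - 2 * s)) := by
            simp_rw [ENNReal.ofReal_mul (by norm_num : (0:ℝ) ≤ 2)]
        _ = ENNReal.ofReal (2:ℝ) * ∫⁻ ξ in Set.Ioi c, ENNReal.ofReal (ξ ^ (-1 - 2 * s)) :=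
            lintegral_const_mul' _ _ ENNReal.ofReal_ne_top
        _ = ENNReal.ofReal (2:ℝ) * ENNReal.ofReal (-c ^ (-1 - 2 * s + 1) / (-1 - 2 * s + 1)) := by
            rw [lint_Ioi (by linarith) hc0]
    have hA : (1 - 2 * s + 1 : ℝ) = 2 - 2 * s := by ring
    have hB : (-1 - 2 * s + 1 : ℝ) = -(2 * s) := by ring
    rw [hA] at head
    rw [hB, neg_div_neg_eq] at tail
    -- powers of c
    have hcr : ∀ r : ℝ, c ^ r = 2 ^ r * b ^ (-(r / 2)) := by
      intro r
      rw [hc, Real.div_rpow (by norm_num) (Real.sqrt_nonneg b), Real.sqrt_eq_rpow,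
        ← Real.rpow_mul hb, div_eq_mul_inv, ← Real.rpow_neg hb]
      congr 1
      ring
    have hD : (0:ℝ) < 2 - 2 * s := by linarith
    have hbsp : (0:ℝ) < b ^ s := Real.rpow_pos_of_pos hb0 s
    have e1 : c ^ (2 - 2 * s) = 2 ^ (2 - 2 * s) * b ^ (s - 1) := by
      rw [hcr]
      congr 2
      ring
    have e2 : c ^ (-(2 * s)) = 2 ^ (-(2 * s)) * b ^ s := by
      rw [hcr]
      congr 2
      ring
    have hbs : b * b ^ (s - 1) = b ^ s := by
      have h : s = 1 + (s - 1) := by ring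
      nth_rewrite 2 [h]
      rw [Real.rpow_add hb0, Real.rpow_one]
    have h2a : (2:ℝ) ^ (2 - 2 * s) ≤ 4 := by
      have h1 : (2:ℝ) ^ (2 - 2 * s) ≤ (2:ℝ) ^ (2:ℝ) :=
        Real.rpow_le_rpow_of_exponent_le (by norm_num) (by linarith)
      have h2 : (2:ℝ) ^ (2:ℝ) = 4 := by
        rw [show (2:ℝ) = ((2:ℕ):ℝ) by norm_num, Real.rpow_natCast]; norm_num
      linarith
    have h2b : (2:ℝ) ^ (-(2 * s)) ≤ 1 :=
      Real.rpow_le_one_of_one_le_of_nonpos (by norm_num) (by linarith)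
    have hbs1 : (0:ℝ) ≤ b ^ (s - 1) := Real.rpow_nonneg hb _
    have hreal : b / 2 * (c ^ (2 - 2 * s) / (2 - 2 * s)) + 2 * (c ^ (-(2 * s)) / (2 * s))
        ≤ (2 / (2 - 2 * s) + 1 / s) * b ^ s := by
      rw [e1, e2]
      have key1 : b / 2 * (2 ^ (2 - 2 * s) * b ^ (s - 1) / (2 - 2 * s))
          ≤ 2 / (2 - 2 * s) * b ^ s := by
        calc b / 2 * (2 ^ (2 - 2 * s) * b ^ (s - 1) / (2 - 2 * s))
            = b * b ^ (s - 1) * 2 ^ (2 - 2 * s) / 2 / (2 - 2 * s) := by ring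
          _ = b ^ s * 2 ^ (2 - 2 * s) / 2 / (2 - 2 * s) := by rw [hbs]
          _ ≤ b ^ s * 4 / 2 / (2 - 2 * s) := by gcongr
          _ = 2 / (2 - 2 * s) * b ^ s := by ring
      have key2 : 2 * (2 ^ (-(2 * s)) * b ^ s / (2 * s)) ≤ 1 / s * b ^ s := by
        have hq : 2 * (2 ^ (-(2 * s)) * b ^ s / (2 * s)) = 2 ^ (-(2 * s)) * b ^ s / s := by
          have hs' : s ≠ 0 := hs.ne'
          field_simp
        rw [hq]
        calc 2 ^ (-(2 * s)) * b ^ s / s ≤ 1 * b ^ s / s := by gcongr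
          _ = 1 / s * b ^ s := by ring
      linarith
    calc ∫⁻ ξ in Set.Ioi (0:ℝ), ENNReal.ofReal (min 2 (b * ξ ^ 2 / 2) * ξ ^ (-1 - 2 * s))
        = (∫⁻ ξ in Set.Ioc (0:ℝ) c, ENNReal.ofReal (min 2 (b * ξ ^ 2 / 2) * ξ ^ (-1 - 2 * s)))
          + ∫⁻ ξ in Set.Ioi c, ENNReal.ofReal (min 2 (b * ξ ^ 2 / 2) * ξ ^ (-1 - 2 * s)) := by
          rw [← hsplit, lintegral_union measurableSet_Ioi hdisj]
      _ ≤ ENNReal.ofReal (b / 2) * ENNReal.ofReal (c ^ (2 - 2 * s) / (2 - 2 * s))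
          + ENNReal.ofReal (2:ℝ) * ENNReal.ofReal (c ^ (-(2 * s)) / (2 * s)) :=
          add_le_add head tail
      _ = ENNReal.ofReal (b / 2 * (c ^ (2 - 2 * s) / (2 - 2 * s))
          + 2 * (c ^ (-(2 * s)) / (2 * s))) := by
          rw [← ENNReal.ofReal_mul (by linarith : (0:ℝ) ≤ b / 2),
            ← ENNReal.ofReal_mul (by norm_num : (0:ℝ) ≤ (2:ℝ)),
            ← ENNReal.ofReal_add]
          · exact mul_nonneg (by linarith) (div_nonneg (Real.rpow_nonneg hc0.le _) (by linarith))
          · exact mul_nonneg (by norm_num) (div_nonneg (Real.rpow_nonneg hc0.le _) (by linarith))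
      _ ≤ ENNReal.ofReal ((2 / (2 - 2 * s) + 1 / s) * b ^ s) := ENNReal.ofReal_le_ofReal hreal

lemma keyWrap (s : ℝ) (hs : 0 < s) (hs1 : s < 1) {b : ℝ} (hb : 0 ≤ b) {a : ℝ} (ha : 0 ≤ a)
    (f : ℝ → ℝ)
    (hf : ∀ ξ ∈ Set.Ioi (0:ℝ), f ξ ≤ a * (min 2 (b * ξ ^ 2 / 2) * ξ ^ (-1 - 2 * s))) :
    ∫⁻ ξ in Set.Ioi (0:ℝ), ENNReal.ofReal (f ξ)
      ≤ ENNReal.ofReal (a * ((2 / (2 - 2 * s) + 1 / s) * b ^ s)) := by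
  calc ∫⁻ ξ in Set.Ioi (0:ℝ), ENNReal.ofReal (f ξ)
      ≤ ∫⁻ ξ in Set.Ioi (0:ℝ),
          ENNReal.ofReal (a * (min 2 (b * ξ ^ 2 / 2) * ξ ^ (-1 - 2 * s))) :=
        setLIntegral_mono' measurableSet_Ioi fun ξ hξ => ENNReal.ofReal_le_ofReal (hf ξ hξ)
    _ = ENNReal.ofReal a
        * ∫⁻ ξ in Set.Ioi (0:ℝ), ENNReal.ofReal (min 2 (b * ξ ^ 2 / 2) * ξ ^ (-1 - 2 * s)) := by
        simp_rw [ENNReal.ofReal_mul ha]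
        exact lintegral_const_mul' _ _ ENNReal.ofReal_ne_top
    _ ≤ ENNReal.ofReal a * ENNReal.ofReal ((2 / (2 - 2 * s) + 1 / s) * b ^ s) :=
        mul_le_mul_right (keyK s hs hs1 hb) _
    _ = ENNReal.ofReal (a * ((2 / (2 - 2 * s) + 1 / s) * b ^ s)) :=
        (ENNReal.ofReal_mul ha).symm

lemma mul4_le {a1 a2 a3 w b1 b2 b3 : ℝ} (h1 : a1 ≤ b1) (h2 : a2 ≤ b2) (h3 : a3 ≤ b3)
    (n2 : 0 ≤ a2) (n3 : 0 ≤ a3) (nb1 : 0 ≤ b1) (nb2 : 0 ≤ b2) (nw : 0 ≤ w) :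
    a1 * a2 * a3 * w ≤ b1 * b2 * b3 * w := by
  apply mul_le_mul_of_nonneg_right _ nw
  exact mul_le_mul (mul_le_mul h1 h2 n2 nb1) h3 n3 (mul_nonneg nb1 nb2)

theorem stmt16 (H θ : ℝ) (hH : H ∈ Set.Ioo (0 : ℝ) (1 / 2)) (hθ : θ ∈ Set.Icc (0 : ℝ) H) :
    ∃ C : ℝ, 0 < C ∧ ∀ t h x y : ℝ, 0 < t →
      (∫⁻ ξ in Set.Ioi (0 : ℝ), ENNReal.ofReal
          ((1 - Real.exp (-(2 * t * ξ ^ 2))) * (1 - Real.cos (|x - y| * ξ))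
            * (1 - Real.cos (h * ξ)) * ξ ^ (-1 - 2 * H)))
        ≤ ENNReal.ofReal
            (C * |h| ^ (2 * θ) * min (t ^ (H - θ)) (|x - y| ^ (2 * H - 2 * θ))) := by
  obtain ⟨hH0, hH1⟩ := hH
  obtain ⟨hθ0, hθ1⟩ := hθ
  rcases eq_or_lt_of_le hθ1 with hθH | hθH
  · -- θ = H
    subst hθH
    set K : ℝ := 2 / (2 - 2 * θ) + 1 / θ with hKdef
    have hK : 0 < K := add_pos (div_pos two_pos (by linarith)) (div_pos one_pos hH0)
    refine ⟨4 * K + 1, by linarith, ?_⟩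
    intro t h x y ht
    rw [show θ - θ = (0:ℝ) from sub_self θ, show 2 * θ - 2 * θ = (0:ℝ) from sub_self _,
      Real.rpow_zero, Real.rpow_zero, min_self, mul_one]
    have hf : ∀ ξ ∈ Set.Ioi (0:ℝ),
        (1 - Real.exp (-(2 * t * ξ ^ 2))) * (1 - Real.cos (|x - y| * ξ))
          * (1 - Real.cos (h * ξ)) * ξ ^ (-1 - 2 * θ)
        ≤ 2 * (min 2 (h ^ 2 * ξ ^ 2 / 2) * ξ ^ (-1 - 2 * θ)) := by
      intro ξ hξ
      have hξ0 : (0:ℝ) < ξ := hξ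
      have e1 : 1 - Real.exp (-(2 * t * ξ ^ 2)) ≤ 1 := by
        have := Real.exp_nonneg (-(2 * t * ξ ^ 2)); linarith
      have e3 : 1 - Real.cos (h * ξ) ≤ min 2 (h ^ 2 * ξ ^ 2 / 2) := by
        have h3 := aux_cos_min (h * ξ)
        rw [show (h * ξ) ^ 2 / 2 = h ^ 2 * ξ ^ 2 / 2 from by ring] at h3
        exact h3
      have hmn : (0:ℝ) ≤ min 2 (h ^ 2 * ξ ^ 2 / 2) := le_min (by norm_num) (by positivity)
      calc (1 - Real.exp (-(2 * t * ξ ^ 2))) * (1 - Real.cos (|x - y| * ξ))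
            * (1 - Real.cos (h * ξ)) * ξ ^ (-1 - 2 * θ)
          ≤ 1 * 2 * min 2 (h ^ 2 * ξ ^ 2 / 2) * ξ ^ (-1 - 2 * θ) :=
            mul4_le e1 (aux_cos_le_two _) e3 (aux_cos_nonneg _) (aux_cos_nonneg _)
              (by norm_num) (by norm_num) (Real.rpow_nonneg hξ0.le _)
        _ = 2 * (min 2 (h ^ 2 * ξ ^ 2 / 2) * ξ ^ (-1 - 2 * θ)) := by ring
    refine le_trans (keyWrap θ hH0 (by linarith) (sq_nonneg h) (by norm_num : (0:ℝ) ≤ 2) _ hf)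
      (ENNReal.ofReal_le_ofReal ?_)
    have hpow : (h ^ 2 : ℝ) ^ θ = |h| ^ (2 * θ) := by
      rw [Real.rpow_mul (abs_nonneg h),
        show (|h|:ℝ) ^ (2:ℝ) = h ^ 2 from by
          rw [show (2:ℝ) = ((2:ℕ):ℝ) from by norm_num, Real.rpow_natCast, sq_abs]]
    rw [hpow]
    have hP : (0:ℝ) ≤ |h| ^ (2 * θ) := Real.rpow_nonneg (abs_nonneg h) _
    rw [← hKdef]
    nlinarith [mul_nonneg hK.le hP, hP]
  · -- θ < H
    have hs : 0 < H - θ := by linarith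
    have hs1 : H - θ < 1 := by linarith
    set K : ℝ := 2 / (2 - 2 * (H - θ)) + 1 / (H - θ) with hKdef
    have hK : 0 < K := add_pos (div_pos two_pos (by linarith)) (div_pos one_pos hs)
    refine ⟨16 * K + 1, by linarith, ?_⟩
    intro t h x y ht
    have hP : (0:ℝ) ≤ |h| ^ (2 * θ) := Real.rpow_nonneg (abs_nonneg h) _
    have hθle1 : θ ≤ 1 := by linarith
    have e3gen : ∀ ξ : ℝ, 0 < ξ →
        1 - Real.cos (h * ξ) ≤ 2 * (|h| ^ (2 * θ) * ξ ^ (2 * θ)) := by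
      intro ξ hξ0
      have h3 := aux_cos_rpow hθ0 hθle1 (h * ξ)
      rwa [abs_mul, Real.mul_rpow (abs_nonneg h) (abs_nonneg ξ), abs_of_pos hξ0] at h3
    -- Bound 1 : via t
    have B1 : (∫⁻ ξ in Set.Ioi (0 : ℝ), ENNReal.ofReal
          ((1 - Real.exp (-(2 * t * ξ ^ 2))) * (1 - Real.cos (|x - y| * ξ))
            * (1 - Real.cos (h * ξ)) * ξ ^ (-1 - 2 * H)))
        ≤ ENNReal.ofReal ((16 * K + 1) * |h| ^ (2 * θ) * t ^ (H - θ)) := by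
      have hf : ∀ ξ ∈ Set.Ioi (0:ℝ),
          (1 - Real.exp (-(2 * t * ξ ^ 2))) * (1 - Real.cos (|x - y| * ξ))
            * (1 - Real.cos (h * ξ)) * ξ ^ (-1 - 2 * H)
          ≤ (4 * |h| ^ (2 * θ)) * (min 2 (4 * t * ξ ^ 2 / 2) * ξ ^ (-1 - 2 * (H - θ))) := by
        intro ξ hξ
        have hξ0 : (0:ℝ) < ξ := hξ
        have e1 : 1 - Real.exp (-(2 * t * ξ ^ 2)) ≤ min 2 (4 * t * ξ ^ 2 / 2) := by
          have h1 := aux_exp_min (show (0:ℝ) ≤ 2 * t * ξ ^ 2 by positivity)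
          have h2 : min 1 (2 * t * ξ ^ 2) ≤ min 2 (4 * t * ξ ^ 2 / 2) :=
            min_le_min (by norm_num) (le_of_eq (by ring))
          linarith
        have hmn : (0:ℝ) ≤ min 2 (4 * t * ξ ^ 2 / 2) := le_min (by norm_num) (by positivity)
        calc (1 - Real.exp (-(2 * t * ξ ^ 2))) * (1 - Real.cos (|x - y| * ξ))
              * (1 - Real.cos (h * ξ)) * ξ ^ (-1 - 2 * H)
            ≤ min 2 (4 * t * ξ ^ 2 / 2) * 2 * (2 * (|h| ^ (2 * θ) * ξ ^ (2 * θ)))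
              * ξ ^ (-1 - 2 * H) :=
              mul4_le e1 (aux_cos_le_two _) (e3gen ξ hξ0) (aux_cos_nonneg _) (aux_cos_nonneg _)
                hmn (by norm_num) (Real.rpow_nonneg hξ0.le _)
          _ = (4 * |h| ^ (2 * θ)) * (min 2 (4 * t * ξ ^ 2 / 2)
              * (ξ ^ (2 * θ) * ξ ^ (-1 - 2 * H))) := by ring
          _ = (4 * |h| ^ (2 * θ)) * (min 2 (4 * t * ξ ^ 2 / 2) * ξ ^ (-1 - 2 * (H - θ))) := by
              rw [← Real.rpow_add hξ0, show 2 * θ + (-1 - 2 * H) = -1 - 2 * (H - θ) from by ring]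
      refine le_trans (keyWrap (H - θ) hs hs1 (by linarith : (0:ℝ) ≤ 4 * t)
        (by positivity : (0:ℝ) ≤ 4 * |h| ^ (2 * θ)) _ hf) (ENNReal.ofReal_le_ofReal ?_)
      have h4t : (4 * t) ^ (H - θ) = 4 ^ (H - θ) * t ^ (H - θ) :=
        Real.mul_rpow (by norm_num) ht.le
      have hT : (0:ℝ) < t ^ (H - θ) := Real.rpow_pos_of_pos ht _
      have h44 : (4:ℝ) ^ (H - θ) ≤ 4 := by
        calc (4:ℝ) ^ (H - θ) ≤ (4:ℝ) ^ (1:ℝ) :=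
            Real.rpow_le_rpow_of_exponent_le (by norm_num) (by linarith)
          _ = 4 := Real.rpow_one 4
      rw [h4t, ← hKdef]
      have hQ : (0:ℝ) ≤ K * |h| ^ (2 * θ) * t ^ (H - θ) :=
        mul_nonneg (mul_nonneg hK.le hP) hT.le
      nlinarith [mul_le_mul_of_nonneg_right h44 hQ, mul_nonneg hP hT.le]
    -- Bound 2 : via |x - y|
    have B2 : (∫⁻ ξ in Set.Ioi (0 : ℝ), ENNReal.ofReal
          ((1 - Real.exp (-(2 * t * ξ ^ 2))) * (1 - Real.cos (|x - y| * ξ))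
            * (1 - Real.cos (h * ξ)) * ξ ^ (-1 - 2 * H)))
        ≤ ENNReal.ofReal ((16 * K + 1) * |h| ^ (2 * θ) * |x - y| ^ (2 * H - 2 * θ)) := by
      have hf : ∀ ξ ∈ Set.Ioi (0:ℝ),
          (1 - Real.exp (-(2 * t * ξ ^ 2))) * (1 - Real.cos (|x - y| * ξ))
            * (1 - Real.cos (h * ξ)) * ξ ^ (-1 - 2 * H)
          ≤ (2 * |h| ^ (2 * θ)) * (min 2 ((x - y) ^ 2 * ξ ^ 2 / 2) * ξ ^ (-1 - 2 * (H - θ))) := by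
        intro ξ hξ
        have hξ0 : (0:ℝ) < ξ := hξ
        have e1 : 1 - Real.exp (-(2 * t * ξ ^ 2)) ≤ 1 := by
          have := Real.exp_nonneg (-(2 * t * ξ ^ 2)); linarith
        have e2 : 1 - Real.cos (|x - y| * ξ) ≤ min 2 ((x - y) ^ 2 * ξ ^ 2 / 2) := by
          have h3 := aux_cos_min (|x - y| * ξ)
          rw [show (|x - y| * ξ) ^ 2 / 2 = (x - y) ^ 2 * ξ ^ 2 / 2 from by
            rw [mul_pow, sq_abs]] at h3
          exact h3
        have hmn : (0:ℝ) ≤ min 2 ((x - y) ^ 2 * ξ ^ 2 / 2) := le_min (by norm_num) (by positivity)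
        calc (1 - Real.exp (-(2 * t * ξ ^ 2))) * (1 - Real.cos (|x - y| * ξ))
              * (1 - Real.cos (h * ξ)) * ξ ^ (-1 - 2 * H)
            ≤ 1 * min 2 ((x - y) ^ 2 * ξ ^ 2 / 2) * (2 * (|h| ^ (2 * θ) * ξ ^ (2 * θ)))
              * ξ ^ (-1 - 2 * H) :=
              mul4_le e1 e2 (e3gen ξ hξ0) (aux_cos_nonneg _) (aux_cos_nonneg _)
                (by norm_num) hmn (Real.rpow_nonneg hξ0.le _)
          _ = (2 * |h| ^ (2 * θ)) * (min 2 ((x - y) ^ 2 * ξ ^ 2 / 2)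
              * (ξ ^ (2 * θ) * ξ ^ (-1 - 2 * H))) := by ring
          _ = (2 * |h| ^ (2 * θ)) * (min 2 ((x - y) ^ 2 * ξ ^ 2 / 2)
              * ξ ^ (-1 - 2 * (H - θ))) := by
              rw [← Real.rpow_add hξ0, show 2 * θ + (-1 - 2 * H) = -1 - 2 * (H - θ) from by ring]
      refine le_trans (keyWrap (H - θ) hs hs1 (sq_nonneg (x - y))
        (by positivity : (0:ℝ) ≤ 2 * |h| ^ (2 * θ)) _ hf) (ENNReal.ofReal_le_ofReal ?_)
      have hxy : ((x - y) ^ 2 : ℝ) ^ (H - θ) = |x - y| ^ (2 * H - 2 * θ) := by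
        rw [show (2 * H - 2 * θ : ℝ) = 2 * (H - θ) from by ring,
          Real.rpow_mul (abs_nonneg _),
          show (|x - y|:ℝ) ^ (2:ℝ) = (x - y) ^ 2 from by
            rw [show (2:ℝ) = ((2:ℕ):ℝ) from by norm_num, Real.rpow_natCast, sq_abs]]
      rw [hxy, ← hKdef]
      have hA : (0:ℝ) ≤ |x - y| ^ (2 * H - 2 * θ) := Real.rpow_nonneg (abs_nonneg _) _
      nlinarith [mul_nonneg (mul_nonneg hK.le hP) hA, mul_nonneg hP hA]
    -- combine
    have hC'P : (0:ℝ) ≤ (16 * K + 1) * |h| ^ (2 * θ) := mul_nonneg (by linarith) hP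
    have hdist : (16 * K + 1) * |h| ^ (2 * θ) * min (t ^ (H - θ)) (|x - y| ^ (2 * H - 2 * θ))
        = min ((16 * K + 1) * |h| ^ (2 * θ) * t ^ (H - θ))
            ((16 * K + 1) * |h| ^ (2 * θ) * |x - y| ^ (2 * H - 2 * θ)) :=
      mul_min_of_nonneg _ _ hC'P
    rw [hdist]
    rcases min_cases ((16 * K + 1) * |h| ^ (2 * θ) * t ^ (H - θ))
        ((16 * K + 1) * |h| ^ (2 * θ) * |x - y| ^ (2 * H - 2 * θ)) with ⟨heq, _⟩ | ⟨heq, _⟩ <;>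
      rw [heq]
    · exact B1
    · exact B2
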